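/- Let R = GF(2)[c]/(c³) and S = R[[d]]. The element A = (1 + c)³·(1 + c + d)·(1 + d + c²d)·(1 + d)^{-1} is a unit in S, and for every natural number i the coefficient of c² in the d^i coefficient of A^{-1} equals 1 if i ≡ 2 or 3 (mod 4), and 0 if i ≡ 0 or 1 (mod 4). In particular, for i = 2^u(2v+1) with u ≥ 2 this coefficient equals 0. -/

import Mathlib

open Polynomial PowerSeries

noncomputable section

/-- The ring `R = GF(2)[c] / (c³)`. -/
abbrev R2 : Type := AdjoinRoot (Polynomial.X ^ 3 : Polynomial (ZMod 2))

/-- The class of the variable `c` in `R = GF(2)[c] / (c³)`. -/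
def cR : R2 := AdjoinRoot.root _

/-- The power series ring `S = R[[d]]`. -/
abbrev S2 : Type := PowerSeries R2

/-- The image of `c` in `S = R[[d]]`. -/
def cS : S2 := PowerSeries.C cR

/-- The variable `d` of `S = R[[d]]`. -/
def dS : S2 := PowerSeries.X

/-- The coefficient of `c²` of an element of `R = GF(2)[c] / (c³)`,
computed via the unique representative polynomial of degree `< 3`. -/
def coefc2 (x : R2) : ZMod 2 :=
  (AdjoinRoot.modByMonicHom (Polynomial.monic_X_pow 3) x).coeff 2

/-- The coefficients of the explicit inverse power series. -/
def xcoef (n : ℕ) : R2 :=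
  1 + (if n % 2 = 1 then cR else 0) + (if n % 4 = 2 ∨ n % 4 = 3 then cR ^ 2 else 0)

/-- The explicit inverse power series. -/
def Xinv : S2 := PowerSeries.mk xcoef

lemma my_inverse_eq {M : Type*} [CommMonoidWithZero M] {a b : M} (h : a * b = 1) :
    Ring.inverse a = b := by
  have hu : IsUnit a := IsUnit.of_mul_eq_one b h
  calc Ring.inverse a = Ring.inverse a * (a * b) := by rw [h, mul_one]
    _ = (Ring.inverse a * a) * b := (mul_assoc _ _ _).symm
    _ = b := by rw [Ring.inverse_mul_cancel a hu, one_mul]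

lemma h2R : (2 : R2) = 0 := by
  rw [← map_ofNat (algebraMap (ZMod 2) R2) 2, show (2 : ZMod 2) = 0 from rfl, map_zero]

lemma h3R : cR ^ 3 = 0 := by
  rw [cR, ← AdjoinRoot.mk_X, ← map_pow, AdjoinRoot.mk_self]

lemma h2S : (2 : S2) = 0 := by
  rw [← map_ofNat (PowerSeries.C (R := R2)) 2, h2R, map_zero]

lemma h3S : cS ^ 3 = 0 := by
  rw [cS, ← map_pow, h3R, map_zero]

lemma hB : (1 + cS) ^ 3 * (1 + cS + dS) * (1 + dS + cS ^ 2 * dS)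
    = 1 + cS * dS + cS * dS ^ 2 + dS ^ 2 := by
  linear_combination
    (4 + 9 * dS + 4 * dS ^ 2 + cS + 7 * cS * dS + 3 * cS * dS ^ 2 + 4 * cS ^ 2 * dS
      + cS ^ 2 * dS ^ 2 + cS ^ 3 * dS) * h3S +
    (dS + 2 * cS + 3 * cS * dS + cS * dS ^ 2 + 3 * cS ^ 2 + 5 * cS ^ 2 * dS
      + 2 * cS ^ 2 * dS ^ 2) * h2S

lemma hY : (1 + dS) * PowerSeries.mk (fun _ => (1 : R2)) = 1 := by
  ext n
  rcases n with _ | n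
  · simp [dS, add_mul]
  · simp only [dS, add_mul, one_mul, map_add, PowerSeries.coeff_mk,
      PowerSeries.coeff_succ_X_mul, PowerSeries.coeff_one, Nat.succ_ne_zero, if_false]
    linear_combination h2R

lemma hkey : (1 + cS * dS + cS * dS ^ 2 + dS ^ 2) * Xinv = 1 + dS := by
  have expand : (1 + cS * dS + cS * dS ^ 2 + dS ^ 2) * Xinv
      = Xinv + PowerSeries.C cR * (PowerSeries.X ^ 1 * Xinv)
        + PowerSeries.C cR * (PowerSeries.X ^ 2 * Xinv)
        + PowerSeries.X ^ 2 * Xinv := by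
    rw [cS, dS]; ring
  rw [expand]
  ext n
  match n with
  | 0 =>
    simp [PowerSeries.coeff_X_pow_mul', PowerSeries.coeff_C_mul, Xinv,
      PowerSeries.coeff_mk, xcoef, dS]
  | 1 =>
    simp only [map_add, PowerSeries.coeff_C_mul, PowerSeries.coeff_X_pow_mul', Xinv,
      PowerSeries.coeff_mk, dS, PowerSeries.coeff_one, PowerSeries.coeff_X]
    norm_num [xcoef]
    linear_combination cR * h2R
  | (n + 2) =>
    simp only [map_add, PowerSeries.coeff_C_mul, PowerSeries.coeff_X_pow_mul', Xinv,
      PowerSeries.coeff_mk, dS, PowerSeries.coeff_one, PowerSeries.coeff_X]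
    rw [if_pos (show 1 ≤ n + 2 by omega), if_pos (show 2 ≤ n + 2 by omega),
      if_neg (show ¬(n + 2 = 0) by omega), if_neg (show ¬(n + 2 = 1) by omega)]
    have h4 : n % 4 = 0 ∨ n % 4 = 1 ∨ n % 4 = 2 ∨ n % 4 = 3 := by omega
    rcases h4 with h | h | h | h
    · simp only [xcoef, show (n + 2) % 2 = 0 by omega, show (n + 2) % 4 = 2 by omega,
        show (n + 2 - 1) % 2 = 1 by omega, show (n + 2 - 1) % 4 = 1 by omega,
        show (n + 2 - 2) % 2 = 0 by omega, show (n + 2 - 2) % 4 = 0 by omega]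
      norm_num
      linear_combination (1 + cR + cR ^ 2) * h2R
    · simp only [xcoef, show (n + 2) % 2 = 1 by omega, show (n + 2) % 4 = 3 by omega,
        show (n + 2 - 1) % 2 = 0 by omega, show (n + 2 - 1) % 4 = 2 by omega,
        show (n + 2 - 2) % 2 = 1 by omega, show (n + 2 - 2) % 4 = 1 by omega]
      norm_num
      linear_combination (1 + 2 * cR + cR ^ 2) * h2R + h3R
    · simp only [xcoef, show (n + 2) % 2 = 0 by omega, show (n + 2) % 4 = 0 by omega,
        show (n + 2 - 1) % 2 = 1 by omega, show (n + 2 - 1) % 4 = 3 by omega,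
        show (n + 2 - 2) % 2 = 0 by omega, show (n + 2 - 2) % 4 = 2 by omega]
      norm_num
      linear_combination (1 + cR + cR ^ 2 + cR ^ 3) * h2R
    · simp only [xcoef, show (n + 2) % 2 = 1 by omega, show (n + 2) % 4 = 1 by omega,
        show (n + 2 - 1) % 2 = 0 by omega, show (n + 2 - 1) % 4 = 0 by omega,
        show (n + 2 - 2) % 2 = 1 by omega, show (n + 2 - 2) % 4 = 3 by omega]
      norm_num
      linear_combination (1 + 2 * cR + cR ^ 2) * h2R + h3R

lemma coefc2_mk (p : Polynomial (ZMod 2)) :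
    coefc2 (AdjoinRoot.mk _ p) = (p %ₘ (Polynomial.X ^ 3)).coeff 2 := by
  rw [coefc2, AdjoinRoot.modByMonicHom_mk]

lemma coefc2_mk' (p : Polynomial (ZMod 2)) (hd : p.degree < 3) :
    coefc2 (AdjoinRoot.mk _ p) = p.coeff 2 := by
  rw [coefc2_mk,
    (Polynomial.modByMonic_eq_self_iff (Polynomial.monic_X_pow 3)).mpr
      (by rw [Polynomial.degree_X_pow]; exact_mod_cast hd)]

lemma coefc2_one : coefc2 1 = 0 := by
  rw [show (1 : R2) = AdjoinRoot.mk _ 1 from (map_one _).symm,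
    coefc2_mk' 1 (by rw [Polynomial.degree_one]; decide)]
  rw [Polynomial.coeff_one]; norm_num

lemma coefc2_c : coefc2 cR = 0 := by
  rw [show cR = AdjoinRoot.mk _ Polynomial.X from (AdjoinRoot.mk_X).symm,
    coefc2_mk' Polynomial.X (by rw [Polynomial.degree_X]; decide)]
  rw [Polynomial.coeff_X]; norm_num

lemma coefc2_c2 : coefc2 (cR ^ 2) = 1 := by
  rw [show cR ^ 2 = AdjoinRoot.mk _ (Polynomial.X ^ 2) from by
      rw [map_pow, AdjoinRoot.mk_X]; rfl,
    coefc2_mk' (Polynomial.X ^ 2) (by rw [Polynomial.degree_X_pow]; decide)]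
  rw [Polynomial.coeff_X_pow]; norm_num

lemma coefc2_add (a b : R2) : coefc2 (a + b) = coefc2 a + coefc2 b := by
  simp [coefc2, map_add]

lemma coefc2_xcoef (n : ℕ) :
    coefc2 (xcoef n) = if n % 4 = 2 ∨ n % 4 = 3 then 1 else 0 := by
  rw [xcoef, coefc2_add, coefc2_add, coefc2_one]
  have h1 : coefc2 (if n % 2 = 1 then cR else 0) = 0 := by
    split_ifs
    · exact coefc2_c
    · simp [coefc2]
  rw [h1]
  split_ifs
  · rw [coefc2_c2]; ring
  · simp [coefc2]

theorem unit_and_coefc2_a_three :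
    IsUnit ((1 + cS) ^ 3 * (1 + cS + dS) * (1 + dS + cS ^ 2 * dS) * Ring.inverse (1 + dS)) ∧
      (∀ i : ℕ,
        coefc2 (PowerSeries.coeff i
            (Ring.inverse
              ((1 + cS) ^ 3 * (1 + cS + dS) * (1 + dS + cS ^ 2 * dS) * Ring.inverse (1 + dS)))) =
          if i % 4 = 2 ∨ i % 4 = 3 then 1 else 0) ∧
      ∀ u v : ℕ, 2 ≤ u →
        coefc2 (PowerSeries.coeff (2 ^ u * (2 * v + 1))
            (Ring.inverse
              ((1 + cS) ^ 3 * (1 + cS + dS) * (1 + dS + cS ^ 2 * dS) * Ring.inverse (1 + dS)))) = 0 := by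
  have hYu : IsUnit (1 + dS) := IsUnit.of_mul_eq_one _ hY
  have hAX : ((1 + cS) ^ 3 * (1 + cS + dS) * (1 + dS + cS ^ 2 * dS) * Ring.inverse (1 + dS))
      * Xinv = 1 := by
    calc ((1 + cS) ^ 3 * (1 + cS + dS) * (1 + dS + cS ^ 2 * dS) * Ring.inverse (1 + dS)) * Xinv
        = ((1 + cS) ^ 3 * (1 + cS + dS) * (1 + dS + cS ^ 2 * dS) * Xinv)
          * Ring.inverse (1 + dS) := by ring
      _ = (1 + dS) * Ring.inverse (1 + dS) := by rw [hB, hkey]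
      _ = 1 := Ring.mul_inverse_cancel _ hYu
  have hUnit : IsUnit ((1 + cS) ^ 3 * (1 + cS + dS) * (1 + dS + cS ^ 2 * dS)
      * Ring.inverse (1 + dS)) := IsUnit.of_mul_eq_one _ hAX
  have hinvA : Ring.inverse ((1 + cS) ^ 3 * (1 + cS + dS) * (1 + dS + cS ^ 2 * dS)
      * Ring.inverse (1 + dS)) = Xinv := my_inverse_eq hAX
  have hcoef : ∀ i : ℕ,
      coefc2 (PowerSeries.coeff i
        (Ring.inverse
          ((1 + cS) ^ 3 * (1 + cS + dS) * (1 + dS + cS ^ 2 * dS) * Ring.inverse (1 + dS)))) =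
      if i % 4 = 2 ∨ i % 4 = 3 then 1 else 0 := by
    intro i
    rw [hinvA, Xinv, PowerSeries.coeff_mk, coefc2_xcoef]
  refine ⟨hUnit, hcoef, fun u v hu => ?_⟩
  rw [hcoef]
  have h4 : (4 : ℕ) ∣ 2 ^ u * (2 * v + 1) :=
    Dvd.dvd.mul_right (by have := pow_dvd_pow 2 hu; norm_num at this; exact this) _
  rw [if_neg (by omega)]

end
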